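/- For all measurable u, v, w, z : ℝ → ℝ belonging to L²(ℝ), one has the estimate ∫_ℝ∫_ℝ ln(1+|x−y|)|u(x)v(x)||w(y)z(y)| dx dy ≤ ‖u‖_*‖v‖_*‖w‖₂‖z‖₂ + ‖u‖₂‖v‖₂‖w‖_*‖z‖_*; in particular B₁(uv, wz) ≤ ‖u‖_*‖v‖_*‖w‖₂‖z‖₂ + ‖u‖₂‖v‖₂‖w‖_*‖z‖_* whenever the right-hand side is finite. -/

import Mathlib

open MeasureTheory Filter Topology

noncomputable section

/-- Squared Gagliardo seminorm `[u]²` as an extended-real double integral. -/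
def gagSqE (u : ℝ → ℝ) : ENNReal :=
  ∫⁻ x : ℝ, ∫⁻ y : ℝ, ENNReal.ofReal ((u x - u y) ^ 2 / |x - y| ^ 2)

/-- Membership in the fractional Sobolev space `H^{1/2}(ℝ)`:
`u ∈ L²(ℝ)` and `[u]² < ∞`. -/
def memH (u : ℝ → ℝ) : Prop :=
  MemLp u 2 volume ∧ gagSqE u < ⊤

/-- Squared `H^{1/2}` norm `‖u‖² = [u]² + ‖u‖₂²`. -/
def HnormSq (u : ℝ → ℝ) : ℝ :=
  (∫ x : ℝ, ∫ y : ℝ, (u x - u y) ^ 2 / |x - y| ^ 2) + ∫ x : ℝ, (u x) ^ 2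

/-- The `H^{1/2}` norm `‖u‖`. -/
def Hnorm (u : ℝ → ℝ) : ℝ := Real.sqrt (HnormSq u)

/-- Squared weighted norm `‖u‖_*² = ∫ ln(1+|x|) u(x)² dx`. -/
def starSq (u : ℝ → ℝ) : ℝ := ∫ x : ℝ, Real.log (1 + |x|) * (u x) ^ 2

/-- The weighted norm `‖u‖_*`. -/
def starNorm (u : ℝ → ℝ) : ℝ := Real.sqrt (starSq u)

/-- Membership in the space `X = {u ∈ H^{1/2}(ℝ) : ∫ ln(1+|x|)u² < ∞}`. -/
def memX (u : ℝ → ℝ) : Prop :=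
  memH u ∧ (∫⁻ x : ℝ, ENNReal.ofReal (Real.log (1 + |x|) * (u x) ^ 2)) < ⊤

/-- Squared norm of `X`: `‖u‖_X² = ‖u‖² + ‖u‖_*²`. -/
def XnormSq (u : ℝ → ℝ) : ℝ := HnormSq u + starSq u

/-- The norm of `X`. -/
def Xnorm (u : ℝ → ℝ) : ℝ := Real.sqrt (XnormSq u)

/-- The `L^t(ℝ)` norm `‖u‖_t`. -/
def LtNorm (t : ℝ) (u : ℝ → ℝ) : ℝ := (∫ x : ℝ, |u x| ^ t) ^ (1 / t)

/-- `B₁(u,v) = ∫∫ ln(1+|x−y|) u(x) v(y) dx dy`. -/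
def B1 (u v : ℝ → ℝ) : ℝ :=
  ∫ x : ℝ, ∫ y : ℝ, Real.log (1 + |x - y|) * (u x * v y)

/-- `B₂(u,v) = ∫∫ ln(1+1/|x−y|) u(x) v(y) dx dy`. -/
def B2 (u v : ℝ → ℝ) : ℝ :=
  ∫ x : ℝ, ∫ y : ℝ, Real.log (1 + 1 / |x - y|) * (u x * v y)

/-- `B₀ = B₁ − B₂`. -/
def B0 (u v : ℝ → ℝ) : ℝ := B1 u v - B2 u v

def V0 (u : ℝ → ℝ) : ℝ := B0 (fun x => (u x) ^ 2) (fun x => (u x) ^ 2)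
def V1 (u : ℝ → ℝ) : ℝ := B1 (fun x => (u x) ^ 2) (fun x => (u x) ^ 2)
def V2 (u : ℝ → ℝ) : ℝ := B2 (fun x => (u x) ^ 2) (fun x => (u x) ^ 2)

/-- The primitive `F(s) = ∫₀^s f(t) dt`. -/
def Fprim (f : ℝ → ℝ) (s : ℝ) : ℝ := ∫ t in (0 : ℝ)..s, f t

/-- The energy functional `I(u) = ½‖u‖² + ¼V₀(u) − ∫ F(u)`. -/
def Ifun (f : ℝ → ℝ) (u : ℝ → ℝ) : ℝ :=
  (1 / 2) * HnormSq u + (1 / 4) * V0 u - ∫ x : ℝ, Fprim f (u x)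

/-- The `H^{1/2}` inner product. -/
def Hinner (u v : ℝ → ℝ) : ℝ :=
  (∫ x : ℝ, ∫ y : ℝ, (u x - u y) * (v x - v y) / |x - y| ^ 2) + ∫ x : ℝ, u x * v x

/-- The inner product of `X`. -/
def Xinner (u v : ℝ → ℝ) : ℝ :=
  Hinner u v + ∫ x : ℝ, Real.log (1 + |x|) * (u x * v x)

/-- The Fréchet derivative of `I` at `u` evaluated at `v`:
`I'(u)(v) = ⟨u,v⟩ + B₀(u², uv) − ∫ f(u) v`. -/
def Iprime (f : ℝ → ℝ) (u v : ℝ → ℝ) : ℝ :=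
  Hinner u v + B0 (fun x => (u x) ^ 2) (fun x => u x * v x) - ∫ x : ℝ, f (u x) * v x

/-- The dual norm `‖I'(u)‖_{X'}`. -/
def IprimeNorm (f : ℝ → ℝ) (u : ℝ → ℝ) : ℝ :=
  sSup {r : ℝ | ∃ v : ℝ → ℝ, memX v ∧ Xnorm v ≤ 1 ∧ r = |Iprime f u v|}

/-- `u` is a nontrivial element (not a.e. zero). -/
def Nontriv (u : ℝ → ℝ) : Prop := ¬ (u =ᵐ[volume] (0 : ℝ → ℝ))

/-- `u ∈ X` is a critical point of `I` (`I'(u) = 0` in `X'`). -/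
def IsCritPt (f : ℝ → ℝ) (u : ℝ → ℝ) : Prop :=
  memX u ∧ ∀ v : ℝ → ℝ, memX v → Iprime f u v = 0

/-- Critical exponential growth at `+∞`. -/
def CritExpGrowth (f : ℝ → ℝ) : Prop :=
  ∃ ω : ℝ, ω ∈ Set.Ioc (0 : ℝ) Real.pi ∧ ∃ α₀ ∈ Set.Ioo (0 : ℝ) ω,
    (∀ α : ℝ, α₀ < α →
      Tendsto (fun s : ℝ => f s / (Real.exp (α * s ^ 2) - 1)) atTop (𝓝 0)) ∧
    (∀ α ∈ Set.Ioo (0 : ℝ) α₀,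
      Tendsto (fun s : ℝ => f s / (Real.exp (α * s ^ 2) - 1)) atTop atTop)

/-- Subcritical exponential growth at `+∞`. -/
def SubcritExpGrowth (f : ℝ → ℝ) : Prop :=
  ∀ α : ℝ, 0 < α →
    Tendsto (fun s : ℝ => f s / (Real.exp (α * s ^ 2) - 1)) atTop (𝓝 0)

/-- Condition `(f₁)`: `f` continuous, `f(0) = 0`, critical exponential growth, `F ≥ 0`. -/
def Cond_f1 (f : ℝ → ℝ) : Prop :=
  Continuous f ∧ f 0 = 0 ∧ CritExpGrowth f ∧ ∀ t : ℝ, 0 ≤ Fprim f t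

/-- Condition `(f₁')`: `f` continuous, odd, subcritical exponential growth, `F ≥ 0`. -/
def Cond_f1' (f : ℝ → ℝ) : Prop :=
  Continuous f ∧ (∀ t : ℝ, f (-t) = - f t) ∧ SubcritExpGrowth f ∧ ∀ t : ℝ, 0 ≤ Fprim f t

/-- Condition `(f₂)`: `lim_{|t|→0} f(t)/|t| = 0`. -/
def Cond_f2 (f : ℝ → ℝ) : Prop :=
  Tendsto (fun t : ℝ => f t / |t|) (𝓝[≠] (0 : ℝ)) (𝓝 0)

/-- Condition `(f₃)`: there is `θ > 4` with `f(t)t ≥ θF(t) > 0` for all `t ≠ 0`. -/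
def Cond_f3 (f : ℝ → ℝ) : Prop :=
  ∃ θ : ℝ, 4 < θ ∧ ∀ t : ℝ, t ≠ 0 → θ * Fprim f t ≤ f t * t ∧ 0 < Fprim f t

/-- Condition `(f₅)`: `t ↦ f(t)/t³` is increasing on `(0,∞)`. -/
def Cond_f5 (f : ℝ → ℝ) : Prop :=
  StrictMonoOn (fun t : ℝ => f t / t ^ 3) (Set.Ioi (0 : ℝ))

/-- Admissible mountain pass paths: `γ ∈ C([0,1], X)` with `γ(0) = 0`, `I(γ(1)) < 0`. -/
def InGamma (f : ℝ → ℝ) (γ : ℝ → ℝ → ℝ) : Prop :=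
  (∀ t ∈ Set.Icc (0 : ℝ) 1, memX (γ t)) ∧
  (∀ t ∈ Set.Icc (0 : ℝ) 1, ∀ ε : ℝ, 0 < ε → ∃ δ : ℝ, 0 < δ ∧
      ∀ s ∈ Set.Icc (0 : ℝ) 1, |s - t| < δ →
        Xnorm (fun x => γ s x - γ t x) < ε) ∧
  (∀ x : ℝ, γ 0 x = 0) ∧ Ifun f (γ 1) < 0

/-- The mountain pass level `c_mp`. -/
def cMP (f : ℝ → ℝ) : ℝ :=
  sInf {c : ℝ | ∃ γ : ℝ → ℝ → ℝ, InGamma f γ ∧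
    c = sSup ((fun t => Ifun f (γ t)) '' Set.Icc (0 : ℝ) 1)}

end

/-- `L²`-type weighted quantity in `ℝ≥0∞` corresponding to `‖u‖_*`. -/
noncomputable def eStar (u : ℝ → ℝ) : ENNReal :=
  (∫⁻ x : ℝ, ENNReal.ofReal (Real.log (1 + |x|) * (u x) ^ 2)) ^ (1/2 : ℝ)

/-- `L²` norm in `ℝ≥0∞`. -/
noncomputable def eL2 (u : ℝ → ℝ) : ENNReal :=
  (∫⁻ x : ℝ, ENNReal.ofReal ((u x) ^ 2)) ^ (1/2 : ℝ)


section helpers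
open MeasureTheory

-- Hölder with weight
lemma genH (c f g : ℝ → ℝ) (hc : Measurable c) (hc0 : ∀ x, 0 ≤ c x)
    (hf : Measurable f) (hg : Measurable g) :
    ∫⁻ x : ℝ, ENNReal.ofReal (c x * |f x * g x|)
      ≤ (∫⁻ x : ℝ, ENNReal.ofReal (c x * (f x) ^ 2)) ^ (1/2 : ℝ)
        * (∫⁻ x : ℝ, ENNReal.ofReal (c x * (g x) ^ 2)) ^ (1/2 : ℝ) := by
  have hconj : Real.HolderConjugate 2 2 := Real.holderConjugate_iff.mpr ⟨by norm_num, by norm_num⟩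
  have hpt : ∀ x, ENNReal.ofReal (c x * |f x * g x|)
      = ENNReal.ofReal (Real.sqrt (c x) * |f x|) * ENNReal.ofReal (Real.sqrt (c x) * |g x|) := by
    intro x
    rw [← ENNReal.ofReal_mul (by positivity)]
    congr 1
    rw [abs_mul]
    have hcs : Real.sqrt (c x) * Real.sqrt (c x) = c x := Real.mul_self_sqrt (hc0 x)
    linear_combination (-(|f x| * |g x|)) * hcs
  have hmf : AEMeasurable (fun x => ENNReal.ofReal (Real.sqrt (c x) * |f x|)) volume := by
    fun_prop
  have hmg : AEMeasurable (fun x => ENNReal.ofReal (Real.sqrt (c x) * |g x|)) volume := by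
    fun_prop
  calc ∫⁻ x : ℝ, ENNReal.ofReal (c x * |f x * g x|)
      = ∫⁻ x : ℝ, (ENNReal.ofReal (Real.sqrt (c x) * |f x|)
          * ENNReal.ofReal (Real.sqrt (c x) * |g x|)) := by simp_rw [hpt]
    _ ≤ (∫⁻ x : ℝ, ENNReal.ofReal (Real.sqrt (c x) * |f x|) ^ (2:ℝ)) ^ (1/2:ℝ)
        * (∫⁻ x : ℝ, ENNReal.ofReal (Real.sqrt (c x) * |g x|) ^ (2:ℝ)) ^ (1/2:ℝ) :=
        ENNReal.lintegral_mul_le_Lp_mul_Lq volume hconj hmf hmg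
    _ = (∫⁻ x : ℝ, ENNReal.ofReal (c x * (f x) ^ 2)) ^ (1/2 : ℝ)
        * (∫⁻ x : ℝ, ENNReal.ofReal (c x * (g x) ^ 2)) ^ (1/2 : ℝ) := by
        congr 1 <;> congr 1 <;> apply lintegral_congr <;> intro x <;>
        · rw [ENNReal.ofReal_rpow_of_nonneg (by positivity) (by norm_num : (0:ℝ) ≤ 2)]
          congr 1
          rw [Real.rpow_two, mul_pow, sq_abs, Real.sq_sqrt (hc0 x)]


lemma logkey (x y : ℝ) :
    Real.log (1 + |x - y|) ≤ Real.log (1 + |x|) + Real.log (1 + |y|) := by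
  have h1 : (0:ℝ) < 1 + |x| := by positivity
  have h2 : (0:ℝ) < 1 + |y| := by positivity
  have h3 : 1 + |x - y| ≤ (1 + |x|) * (1 + |y|) := by
    have h4 : |x - y| ≤ |x| + |y| := abs_sub x y
    nlinarith [abs_nonneg x, abs_nonneg y]
  calc Real.log (1 + |x - y|) ≤ Real.log ((1 + |x|) * (1 + |y|)) :=
        Real.log_le_log (by positivity) h3
    _ = Real.log (1 + |x|) + Real.log (1 + |y|) := Real.log_mul h1.ne' h2.ne'

lemma eL2_eq_eLpNorm (f : ℝ → ℝ) : eL2 f = eLpNorm f 2 volume := by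
  rw [eL2, eLpNorm_eq_lintegral_rpow_enorm_toReal two_ne_zero ENNReal.ofNat_ne_top]
  norm_num
  congr 1
  apply lintegral_congr
  intro x
  rw [Real.enorm_eq_ofReal_abs, ← ENNReal.ofReal_pow (abs_nonneg _), sq_abs]

lemma eL2_lt_top (f : ℝ → ℝ) (hf : MemLp f 2 volume) : eL2 f < ⊤ := by
  rw [eL2_eq_eLpNorm]; exact hf.2

-- real-side identities
lemma LtNorm2_eq (f : ℝ → ℝ) (hf : Measurable f) : LtNorm 2 f = (eL2 f).toReal := by
  rw [LtNorm, eL2, ← ENNReal.toReal_rpow]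
  congr 1
  rw [integral_eq_lintegral_of_nonneg_ae (Filter.Eventually.of_forall fun x => by positivity)
    (((hf.abs.pow_const (2:ℕ)).stronglyMeasurable.aestronglyMeasurable).congr
      (Filter.Eventually.of_forall fun x => by rw [Real.rpow_two]))]
  congr 1
  apply lintegral_congr
  intro x
  congr 1
  rw [Real.rpow_two, sq_abs]

lemma starNorm_eq (f : ℝ → ℝ) (hf : Measurable f) : starNorm f = (eStar f).toReal := by
  rw [starNorm, starSq, eStar, ← ENNReal.toReal_rpow, Real.sqrt_eq_rpow]
  congr 1
  have hlog : Measurable fun x : ℝ => Real.log (1 + |x|) :=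
    Real.measurable_log.comp (measurable_const.add measurable_abs)
  rw [integral_eq_lintegral_of_nonneg_ae
    (Filter.Eventually.of_forall fun x => mul_nonneg
      (Real.log_nonneg (by simp [le_add_of_nonneg_right])) (sq_nonneg _))
    ((hlog.mul (hf.pow_const 2)).stronglyMeasurable.aestronglyMeasurable)]

end helpers

/-- estimate for B₁(uv, wz). -/
theorem statement5 (u v w z : ℝ → ℝ)
    (hu : Measurable u) (hv : Measurable v) (hw : Measurable w) (hz : Measurable z)
    (hu2 : MemLp u 2 volume) (hv2 : MemLp v 2 volume)
    (hw2 : MemLp w 2 volume) (hz2 : MemLp z 2 volume) :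
    (∫⁻ x : ℝ, ∫⁻ y : ℝ,
        ENNReal.ofReal (Real.log (1 + |x - y|) * (|u x * v x| * |w y * z y|)))
      ≤ eStar u * eStar v * eL2 w * eL2 z + eL2 u * eL2 v * eStar w * eStar z ∧
    ((eStar u < ⊤ ∧ eStar v < ⊤ ∧ eStar w < ⊤ ∧ eStar z < ⊤) →
      B1 (fun x => u x * v x) (fun x => w x * z x)
        ≤ starNorm u * starNorm v * LtNorm 2 w * LtNorm 2 z
            + LtNorm 2 u * LtNorm 2 v * starNorm w * starNorm z) := by
  classical
  set L : ℝ → ℝ := fun x => Real.log (1 + |x|) with hL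
  have hL0 : ∀ x, 0 ≤ L x := fun x => Real.log_nonneg (by simp [abs_nonneg, le_add_of_nonneg_right])
  have hLm : Measurable L := Real.measurable_log.comp (measurable_const.add measurable_abs)
  set f₁ : ℝ → ENNReal := fun x => ENNReal.ofReal (L x * |u x * v x|) with hf₁
  set g₁ : ℝ → ENNReal := fun y => ENNReal.ofReal (|w y * z y|) with hg₁
  set f₂ : ℝ → ENNReal := fun x => ENNReal.ofReal (|u x * v x|) with hf₂
  set g₂ : ℝ → ENNReal := fun y => ENNReal.ofReal (L y * |w y * z y|) with hg₂
  have hm1 : Measurable f₁ := by fun_prop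
  have hm2 : Measurable g₁ := by fun_prop
  have hm3 : Measurable f₂ := by fun_prop
  have hm4 : Measurable g₂ := by fun_prop
  have key1 : ∫⁻ x : ℝ, f₁ x ≤ eStar u * eStar v := by
    simpa [eStar, f₁, L] using genH L u v hLm hL0 hu hv
  have key2 : ∫⁻ y : ℝ, g₁ y ≤ eL2 w * eL2 z := by
    have := genH (fun _ => (1:ℝ)) w z measurable_const (fun _ => zero_le_one) hw hz
    simpa [eL2, g₁] using this
  have key3 : ∫⁻ x : ℝ, f₂ x ≤ eL2 u * eL2 v := by
    have := genH (fun _ => (1:ℝ)) u v measurable_const (fun _ => zero_le_one) hu hv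
    simpa [eL2, f₂] using this
  have key4 : ∫⁻ y : ℝ, g₂ y ≤ eStar w * eStar z := by
    simpa [eStar, g₂, L] using genH L w z hLm hL0 hw hz
  have main : (∫⁻ x : ℝ, ∫⁻ y : ℝ,
        ENNReal.ofReal (Real.log (1 + |x - y|) * (|u x * v x| * |w y * z y|)))
      ≤ eStar u * eStar v * eL2 w * eL2 z + eL2 u * eL2 v * eStar w * eStar z := by
    have step1 : (∫⁻ x : ℝ, ∫⁻ y : ℝ,
          ENNReal.ofReal (Real.log (1 + |x - y|) * (|u x * v x| * |w y * z y|)))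
        ≤ ∫⁻ x : ℝ, ∫⁻ y : ℝ, (f₁ x * g₁ y + f₂ x * g₂ y) := by
      refine lintegral_mono fun x => lintegral_mono fun y => ?_
      have hab : (0:ℝ) ≤ |u x * v x| * |w y * z y| := by positivity
      calc ENNReal.ofReal (Real.log (1 + |x - y|) * (|u x * v x| * |w y * z y|))
          ≤ ENNReal.ofReal ((L x + L y) * (|u x * v x| * |w y * z y|)) :=
            ENNReal.ofReal_le_ofReal (mul_le_mul_of_nonneg_right (logkey x y) hab)
        _ = ENNReal.ofReal ((L x * |u x * v x|) * |w y * z y|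
              + |u x * v x| * (L y * |w y * z y|)) := by congr 1; ring
        _ = f₁ x * g₁ y + f₂ x * g₂ y := by
            rw [ENNReal.ofReal_add (mul_nonneg (mul_nonneg (hL0 x) (abs_nonneg _)) (abs_nonneg _))
                (mul_nonneg (abs_nonneg _) (mul_nonneg (hL0 y) (abs_nonneg _))),
              ENNReal.ofReal_mul (mul_nonneg (hL0 x) (abs_nonneg _)),
              ENNReal.ofReal_mul (abs_nonneg _)]
    have step2 : (∫⁻ x : ℝ, ∫⁻ y : ℝ, (f₁ x * g₁ y + f₂ x * g₂ y))
        = (∫⁻ x, f₁ x) * (∫⁻ y, g₁ y) + (∫⁻ x, f₂ x) * (∫⁻ y, g₂ y) := by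
      have inner : ∀ x : ℝ, (∫⁻ y : ℝ, (f₁ x * g₁ y + f₂ x * g₂ y))
          = f₁ x * (∫⁻ y, g₁ y) + f₂ x * (∫⁻ y, g₂ y) := fun x => by
        rw [lintegral_add_left (by fun_prop), lintegral_const_mul _ hm2,
          lintegral_const_mul _ hm4]
      simp_rw [inner]
      rw [lintegral_add_left (by fun_prop), lintegral_mul_const _ hm1,
        lintegral_mul_const _ hm3]
    calc _ ≤ _ := step1
      _ = _ := step2
      _ ≤ (eStar u * eStar v) * (eL2 w * eL2 z) + (eL2 u * eL2 v) * (eStar w * eStar z) :=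
          add_le_add (mul_le_mul' key1 key2) (mul_le_mul' key3 key4)
      _ = _ := by ring
  refine ⟨main, fun ⟨hfu, hfv, hfw, hfz⟩ => ?_⟩
  have hwt : eL2 u < ⊤ ∧ eL2 v < ⊤ ∧ eL2 w < ⊤ ∧ eL2 z < ⊤ :=
    ⟨eL2_lt_top u hu2, eL2_lt_top v hv2, eL2_lt_top w hw2, eL2_lt_top z hz2⟩
  set R : ENNReal := eStar u * eStar v * eL2 w * eL2 z + eL2 u * eL2 v * eStar w * eStar z
    with hR
  have t1 : eStar u * eStar v * eL2 w * eL2 z ≠ ⊤ :=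
    (ENNReal.mul_lt_top (ENNReal.mul_lt_top (ENNReal.mul_lt_top hfu hfv) hwt.2.2.1)
      hwt.2.2.2).ne
  have t2 : eL2 u * eL2 v * eStar w * eStar z ≠ ⊤ :=
    (ENNReal.mul_lt_top (ENNReal.mul_lt_top (ENNReal.mul_lt_top hwt.1 hwt.2.1) hfw) hfz).ne
  have hRtop : R ≠ ⊤ := by
    rw [hR]
    exact ENNReal.add_ne_top.mpr ⟨t1, t2⟩
  have habs : ENNReal.ofReal (B1 (fun x => u x * v x) (fun x => w x * z x)) ≤ R := by
    refine le_trans ?_ main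
    rw [B1]
    calc ENNReal.ofReal (∫ x : ℝ, ∫ y : ℝ, Real.log (1 + |x - y|) * ((u x * v x) * (w y * z y)))
        ≤ (‖∫ x : ℝ, ∫ y : ℝ, Real.log (1 + |x - y|) * ((u x * v x) * (w y * z y))‖₊ : ENNReal) := by
          rw [← enorm_eq_nnnorm, Real.enorm_eq_ofReal_abs]
          exact ENNReal.ofReal_le_ofReal (le_abs_self _)
      _ ≤ ∫⁻ x : ℝ, (‖∫ y : ℝ, Real.log (1 + |x - y|) * ((u x * v x) * (w y * z y))‖₊ : ENNReal) :=
          enorm_integral_le_lintegral_enorm _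
      _ ≤ ∫⁻ x : ℝ, ∫⁻ y : ℝ,
            (‖Real.log (1 + |x - y|) * ((u x * v x) * (w y * z y))‖₊ : ENNReal) :=
          lintegral_mono fun x => enorm_integral_le_lintegral_enorm _
      _ = ∫⁻ x : ℝ, ∫⁻ y : ℝ,
            ENNReal.ofReal (Real.log (1 + |x - y|) * (|u x * v x| * |w y * z y|)) := by
          refine lintegral_congr fun x => lintegral_congr fun y => ?_
          rw [← enorm_eq_nnnorm, Real.enorm_eq_ofReal_abs]
          congr 1
          rw [abs_mul, abs_mul, abs_of_nonneg (Real.log_nonneg (by simp [le_add_of_nonneg_right]))]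
  have hB1 : B1 (fun x => u x * v x) (fun x => w x * z x) ≤ R.toReal := by
    rcases le_or_gt (B1 (fun x => u x * v x) (fun x => w x * z x)) 0 with h | h
    · exact h.trans ENNReal.toReal_nonneg
    · exact (ENNReal.ofReal_le_iff_le_toReal hRtop).mp habs
  refine hB1.trans_eq ?_
  rw [starNorm_eq u hu, starNorm_eq v hv, starNorm_eq w hw, starNorm_eq z hz,
    LtNorm2_eq u hu, LtNorm2_eq v hv, LtNorm2_eq w hw, LtNorm2_eq z hz,
    hR, ENNReal.toReal_add t1 t2]
  simp [ENNReal.toReal_mul]
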